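/- Let ℍ be a quaternion division algebra over a field F. Then the commutator subgroup of ℍ^× equals SL₁(ℍ) = { x ∈ ℍ^× : Nrd(x) = 1 }, i.e., [ℍ^×, ℍ^×] = SL₁(ℍ). -/

import Mathlib

open scoped Quaternion

namespace QuatCommAux

variable {F : Type*} [Field F] {c₁ c₂ : F}

open QuaternionAlgebra
open scoped commutatorElement

/-- The reduced norm of a quaternion, in coordinates. -/
def nrd (x : ℍ[F,c₁,c₂]) : F :=
  x.re ^ 2 - c₁ * x.imI ^ 2 - c₂ * x.imJ ^ 2 + c₁ * c₂ * x.imK ^ 2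

lemma mul_star_eq_nrd (x : ℍ[F,c₁,c₂]) : x * star x = ((nrd x : F) : ℍ[F,c₁,c₂]) := by
  ext <;>
    simp only [nrd, QuaternionAlgebra.re_mul, QuaternionAlgebra.imI_mul,
      QuaternionAlgebra.imJ_mul, QuaternionAlgebra.imK_mul, QuaternionAlgebra.re_star,
      QuaternionAlgebra.imI_star, QuaternionAlgebra.imJ_star, QuaternionAlgebra.imK_star,
      QuaternionAlgebra.re_coe, QuaternionAlgebra.imI_coe, QuaternionAlgebra.imJ_coe,
      QuaternionAlgebra.imK_coe] <;> ring

lemma nrd_mul (x y : ℍ[F,c₁,c₂]) : nrd (x * y) = nrd x * nrd y := by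
  simp only [nrd, re_mul, imI_mul, imJ_mul, imK_mul]
  ring

lemma nrd_one : nrd (1 : ℍ[F,c₁,c₂]) = 1 := by simp [nrd]

lemma nrd_eq_one_iff (x : ℍ[F,c₁,c₂]) : x * star x = 1 ↔ nrd x = 1 := by
  rw [mul_star_eq_nrd, ← QuaternionAlgebra.coe_one, QuaternionAlgebra.coe_inj]

lemma nrd_inv_pair (a : ℍ[F,c₁,c₂]ˣ) : nrd a.val * nrd (↑a⁻¹ : ℍ[F,c₁,c₂]) = 1 := by
  rw [← nrd_mul, ← Units.val_mul]
  simp [nrd_one]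

/-- The norm-one subgroup of the units. -/
def K (F : Type*) [Field F] (c₁ c₂ : F) : Subgroup ℍ[F,c₁,c₂]ˣ where
  carrier := {x | nrd x.val = 1}
  one_mem' := by simpa using (nrd_one (F := F) (c₁ := c₁) (c₂ := c₂))
  mul_mem' := by
    intro a b ha hb
    show nrd _ = 1
    rw [Units.val_mul, nrd_mul, ha, hb, one_mul]
  inv_mem' := by
    intro a ha
    have h := nrd_inv_pair a
    show nrd _ = 1
    rwa [ha, one_mul] at h

lemma commutator_le_K : commutator ℍ[F,c₁,c₂]ˣ ≤ K F c₁ c₂ := by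
  rw [commutator_def, Subgroup.commutator_le]
  intro g _ h _
  show nrd _ = 1
  have e : (⁅g, h⁆ : ℍ[F,c₁,c₂]ˣ).val
      = g.val * h.val * (↑g⁻¹ : ℍ[F,c₁,c₂]) * (↑h⁻¹ : ℍ[F,c₁,c₂]) := rfl
  rw [e, nrd_mul, nrd_mul, nrd_mul]
  have hg := nrd_inv_pair g
  have hh := nrd_inv_pair h
  calc nrd g.val * nrd h.val * nrd (↑g⁻¹ : ℍ[F,c₁,c₂]) * nrd (↑h⁻¹ : ℍ[F,c₁,c₂])
      = (nrd g.val * nrd (↑g⁻¹ : ℍ[F,c₁,c₂])) * (nrd h.val * nrd (↑h⁻¹ : ℍ[F,c₁,c₂])) := by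
        ring
    _ = 1 := by rw [hg, hh, one_mul]

lemma mem_commutator_aux (hdiv : ∀ x : ℍ[F,c₁,c₂], x ≠ 0 → IsUnit x)
    (x : ℍ[F,c₁,c₂]ˣ) (y u : ℍ[F,c₁,c₂]) (hy : y ≠ 0) (hu : u ≠ 0)
    (h : x.val * (u * y) = y * u) : x ∈ commutator ℍ[F,c₁,c₂]ˣ := by
  set Y := (hdiv y hy).unit with hY
  set U := (hdiv u hu).unit with hU
  have hYv : Y.val = y := (hdiv y hy).unit_spec
  have hUv : U.val = u := (hdiv u hu).unit_spec
  have h1 : x * (U * Y) = Y * U := by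
    apply Units.ext
    simp only [Units.val_mul, hYv, hUv]
    exact h
  have h2 : x = ⁅Y, U⁆ := by
    rw [commutatorElement_def, ← h1]
    group
  rw [h2, commutator_def]
  exact Subgroup.commutator_mem_commutator (Subgroup.mem_top _) (Subgroup.mem_top _)

lemma key_identity (x u : ℍ[F,c₁,c₂]) (hx : x * star x = 1) (hu : u * x = star x * u) :
    x * (u * (1 + x)) = (1 + x) * u := by
  calc x * (u * (1 + x)) = x * u + x * (u * x) := by rw [mul_add, mul_one, mul_add]
    _ = x * u + x * star x * u := by rw [hu, mul_assoc]
    _ = x * u + u := by rw [hx, one_mul]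
    _ = (1 + x) * u := by rw [add_mul, one_mul, add_comm]

lemma i_ne_zero : ((⟨0,1,0,0⟩ : ℍ[F,c₁,c₂])) ≠ 0 := by
  intro hh
  simpa using congrArg QuaternionAlgebra.imI hh

lemma j_ne_zero : ((⟨0,0,1,0⟩ : ℍ[F,c₁,c₂])) ≠ 0 := by
  intro hh
  simpa using congrArg QuaternionAlgebra.imJ hh

lemma c₁_ne_zero (hdiv : ∀ x : ℍ[F,c₁,c₂], x ≠ 0 → IsUnit x) : c₁ ≠ 0 := by
  intro h
  have h1 : IsUnit ((⟨0,1,0,0⟩ : ℍ[F,c₁,c₂]) * ⟨0,1,0,0⟩) :=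
    (hdiv _ i_ne_zero).mul (hdiv _ i_ne_zero)
  have h0 : (⟨0,1,0,0⟩ : ℍ[F,c₁,c₂]) * ⟨0,1,0,0⟩ = 0 := by ext <;> simp [h]
  rw [h0] at h1
  obtain ⟨w, hw⟩ := h1
  have h2 : (1 : ℍ[F,c₁,c₂]) = 0 := by
    rw [← w.mul_inv, hw, zero_mul]
  simpa using congrArg QuaternionAlgebra.re h2

lemma c₂_ne_zero (hdiv : ∀ x : ℍ[F,c₁,c₂], x ≠ 0 → IsUnit x) : c₂ ≠ 0 := by
  intro h
  have h1 : IsUnit ((⟨0,0,1,0⟩ : ℍ[F,c₁,c₂]) * ⟨0,0,1,0⟩) :=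
    (hdiv _ j_ne_zero).mul (hdiv _ j_ne_zero)
  have h0 : (⟨0,0,1,0⟩ : ℍ[F,c₁,c₂]) * ⟨0,0,1,0⟩ = 0 := by ext <;> simp [h]
  rw [h0] at h1
  obtain ⟨w, hw⟩ := h1
  have h2 : (1 : ℍ[F,c₁,c₂]) = 0 := by
    rw [← w.mul_inv, hw, zero_mul]
  simpa using congrArg QuaternionAlgebra.re h2

end QuatCommAux

open QuatCommAux in
/-- For a quaternion division algebra `ℍ` over a field `F` (char `≠ 2`), the commutator
subgroup of `ℍ^×` is the reduced norm one group: `[ℍ^×, ℍ^×] = SL₁(ℍ)`, where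
`Nrd(x) = x · x̄`. -/
theorem quaternion_commutator_eq_SL1 (F : Type*) [Field F] (h2 : (2 : F) ≠ 0)
    (c₁ c₂ : F) (hdiv : ∀ x : ℍ[F,c₁,c₂], x ≠ 0 → IsUnit x) :
    ∀ x : ℍ[F,c₁,c₂]ˣ,
      x ∈ commutator ℍ[F,c₁,c₂]ˣ ↔ x.val * star x.val = 1 := by
  intro x
  constructor
  · intro hx
    rw [nrd_eq_one_iff]
    exact commutator_le_K hx
  · intro hx
    have hn : nrd x.val = 1 := (nrd_eq_one_iff _).mp hx
    by_cases hpure : x.val.imI = 0 ∧ x.val.imJ = 0 ∧ x.val.imK = 0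
    · obtain ⟨hb, hc, hd⟩ := hpure
      have ha2 : (x.val.re - 1) * (x.val.re + 1) = 0 := by
        have h1 : x.val.re ^ 2 = 1 := by
          have : nrd x.val = x.val.re ^ 2 := by simp [nrd, hb, hc, hd]
          rw [← this, hn]
        linear_combination h1
      rcases mul_eq_zero.mp ha2 with h1 | h1
      · have hre : x.val.re = 1 := by linear_combination h1
        have hv : x.val = (1 : ℍ[F,c₁,c₂]ˣ).val := by
          rw [Units.val_one]; ext <;> simp [hb, hc, hd, hre]
        rw [Units.ext hv]
        exact Subgroup.one_mem _
      · have hre : x.val.re = -1 := by linear_combination h1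
        -- x = -1, which is the commutator of i and j
        apply mem_commutator_aux hdiv x (⟨0,1,0,0⟩ : ℍ[F,c₁,c₂]) (⟨0,0,1,0⟩ : ℍ[F,c₁,c₂])
          i_ne_zero j_ne_zero
        ext <;> simp [hb, hc, hd, hre] <;> ring
    · -- nonzero pure part
      have hxs : x.val * star x.val = 1 := hx
      set y : ℍ[F,c₁,c₂] := 1 + x.val with hydef
      by_cases hbc : x.val.imI = 0 ∧ x.val.imJ = 0
      · have hd : x.val.imK ≠ 0 := fun hd => hpure ⟨hbc.1, hbc.2, hd⟩
        have hy : y ≠ 0 := by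
          intro hh
          apply hd
          simpa [hydef] using congrArg QuaternionAlgebra.imK hh
        apply mem_commutator_aux hdiv x y (⟨0,1,0,0⟩ : ℍ[F,c₁,c₂]) hy i_ne_zero
        apply key_identity _ _ hxs
        ext <;> simp [hbc.1, hbc.2] <;> ring
      · set u : ℍ[F,c₁,c₂] := ⟨0, x.val.imJ * c₂, -(x.val.imI * c₁), 0⟩ with hudef
        have hy : y ≠ 0 := by
          intro hh
          apply hbc
          constructor
          · simpa [hydef] using congrArg QuaternionAlgebra.imI hh
          · simpa [hydef] using congrArg QuaternionAlgebra.imJ hh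
        have hu : u ≠ 0 := by
          intro hh
          apply hbc
          have h1 := congrArg QuaternionAlgebra.imI hh
          have h2 := congrArg QuaternionAlgebra.imJ hh
          simp [hudef] at h1 h2
          constructor
          · rcases h2 with h2 | h2
            · exact h2
            · exact absurd h2 (c₁_ne_zero hdiv)
          · rcases h1 with h1 | h1
            · exact h1
            · exact absurd h1 (c₂_ne_zero hdiv)
        apply mem_commutator_aux hdiv x y u hy hu
        apply key_identity _ _ hxs
        ext <;> simp [hudef] <;> ring
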